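/- Let X be a complex Banach space and (a_n)_{n≥1} a sequence in X, and assume that for some x > 0 and C > 0 one has ‖e^{-xt} ∑_{n : log n < t} n^{x} a_n‖ ≤ C for every t ≥ 0, where sums run over natural numbers n ≥ 1 with log n < t. Then for every y ∈ ℝ, writing z = x + iy, the series ∑_{n=1}^∞ a_n n^{-z} converges in X (i.e. the partial sums ∑_{n : log n < v} a_n n^{-z} converge as v → ∞), and for every t ≥ 0 one has ‖e^{xt} ∑_{n : log n ≥ t} a_n n^{-z}‖ ≤ C(3 + |y|/x), where ∑_{n : log n ≥ t} a_n n^{-z} denotes the limit of ∑_{n : t ≤ log n < v} a_n n^{-z} as v → ∞. -/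

import Mathlib

open Filter Finset intervalIntegral

namespace Stmt18Aux

noncomputable def mm (v : ℝ) : ℕ := ⌈Real.exp v⌉₊ - 1

lemma le_mm_iff {n : ℕ} {v : ℝ} : n ≤ mm v ↔ (n : ℝ) < Real.exp v := by
  have h1 : 1 ≤ ⌈Real.exp v⌉₊ := Nat.one_le_ceil_iff.mpr (Real.exp_pos v)
  unfold mm
  constructor
  · intro h; exact Nat.lt_ceil.mp (by omega)
  · intro h; have := Nat.lt_ceil.mpr h; omega

lemma filter_eq (v : ℝ) :
    (Finset.Icc 1 ⌊Real.exp v⌋₊).filter (fun n : ℕ => Real.log (n : ℝ) < v)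
      = Finset.Ioc 0 (mm v) := by
  ext n
  simp only [Finset.mem_filter, Finset.mem_Icc, Finset.mem_Ioc]
  constructor
  · rintro ⟨⟨h1, _⟩, hlog⟩
    have hn : (0:ℝ) < n := by exact_mod_cast h1
    exact ⟨h1, le_mm_iff.mpr ((Real.log_lt_iff_lt_exp hn).mp hlog)⟩
  · rintro ⟨h1, h2⟩
    have hn : (0:ℝ) < n := by exact_mod_cast h1
    have hlt : (n:ℝ) < Real.exp v := le_mm_iff.mp h2
    exact ⟨⟨h1, Nat.le_floor hlt.le⟩, (Real.log_lt_iff_lt_exp hn).mpr hlt⟩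

lemma filter_eq2 (t v : ℝ) :
    (Finset.Icc 1 ⌊Real.exp v⌋₊).filter
        (fun n : ℕ => t ≤ Real.log (n : ℝ) ∧ Real.log (n : ℝ) < v)
      = Finset.Ioc (mm t) (mm v) := by
  ext n
  simp only [Finset.mem_filter, Finset.mem_Icc, Finset.mem_Ioc]
  constructor
  · rintro ⟨⟨h1, _⟩, hle, hlog⟩
    have hn : (0:ℝ) < n := by exact_mod_cast h1
    have h2 : n ≤ mm v := le_mm_iff.mpr ((Real.log_lt_iff_lt_exp hn).mp hlog)
    have h3 : ¬ n ≤ mm t := by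
      intro h
      have := le_mm_iff.mp h
      exact absurd ((Real.le_log_iff_exp_le hn).mp hle) (not_le.mpr this)
    exact ⟨by omega, h2⟩
  · rintro ⟨h1, h2⟩
    have h1' : 1 ≤ n := by omega
    have hn : (0:ℝ) < n := by exact_mod_cast h1'
    have hlt : (n:ℝ) < Real.exp v := le_mm_iff.mp h2
    have hexp : Real.exp t ≤ n := by
      by_contra h
      exact absurd (le_mm_iff.mpr (not_le.mp h)) (not_le.mpr h1)
    exact ⟨⟨h1', Nat.le_floor hlt.le⟩, (Real.le_log_iff_exp_le hn).mpr hexp,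
      (Real.log_lt_iff_lt_exp hn).mpr hlt⟩

lemma tendsto_mm : Tendsto mm atTop atTop := by
  rw [tendsto_atTop]
  intro b
  filter_upwards [Real.tendsto_exp_atTop.eventually (eventually_gt_atTop (b:ℝ))] with v hv
  exact le_mm_iff.mpr hv

lemma cpow_diff_bound {x : ℝ} (hx : 0 < x) {w : ℂ} (hwre : w.re = 2 * x)
    {u : ℝ} (hu : 1 ≤ u) :
    ‖(u : ℂ) ^ (-w) - ((u + 1 : ℝ) : ℂ) ^ (-w)‖
      ≤ ‖w‖ * ((u ^ (-(2 * x)) - (u + 1) ^ (-(2 * x))) / (2 * x)) := by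
  have hu0 : (0:ℝ) < u := by linarith
  have hw0 : w ≠ 0 := by
    intro h
    rw [h] at hwre
    simp at hwre
    linarith
  set r : ℂ := -w - 1 with hr
  have hrne : r ≠ -1 := by
    intro h
    apply hw0
    rw [hr] at h
    linear_combination -h
  have h0mem : (0:ℝ) ∉ Set.uIcc u (u + 1) := by
    rw [Set.uIcc_of_le (by linarith)]
    rintro ⟨h0, h1⟩
    linarith
  have hint := integral_cpow (a := u) (b := u + 1) (Or.inr ⟨hrne, h0mem⟩)
  have hr1 : r + 1 = -w := by rw [hr]; ring
  have key : (u : ℂ) ^ (-w) - ((u + 1 : ℝ) : ℂ) ^ (-w)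
      = w * ∫ s in u..(u + 1), (s : ℂ) ^ r := by
    rw [hint, hr1]
    push_cast
    rw [div_neg, mul_neg, mul_div_assoc', mul_comm w, mul_div_assoc, div_self hw0, mul_one,
      neg_sub]
  rw [key, norm_mul]
  have hnorm : (∫ s in u..(u + 1), ‖(s : ℂ) ^ r‖)
      = ∫ s in u..(u + 1), s ^ (-(2 * x) - 1) := by
    apply intervalIntegral.integral_congr
    intro s hs
    rw [Set.uIcc_of_le (by linarith)] at hs
    have hs0 : (0:ℝ) < s := by linarith [hs.1]
    show ‖(s:ℂ) ^ r‖ = s ^ (-(2 * x) - 1)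
    rw [Complex.norm_cpow_eq_rpow_re_of_pos hs0]
    congr 1
    rw [hr]
    simp [Complex.sub_re, Complex.neg_re, hwre]
  have hrp : (∫ s in u..(u + 1), s ^ (-(2 * x) - 1))
      = (u ^ (-(2 * x)) - (u + 1) ^ (-(2 * x))) / (2 * x) := by
    rw [integral_rpow (Or.inr ⟨by intro h; nlinarith, h0mem⟩)]
    have he : -(2 * x) - 1 + 1 = -(2 * x) := by ring
    rw [he]
    rw [div_eq_div_iff (by linarith) (by positivity)]
    ring
  calc ‖w‖ * ‖∫ s in u..(u + 1), (s : ℂ) ^ r‖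
      ≤ ‖w‖ * ∫ s in u..(u + 1), ‖(s : ℂ) ^ r‖ := by
        apply mul_le_mul_of_nonneg_left _ (norm_nonneg w)
        exact intervalIntegral.norm_integral_le_integral_norm (by linarith)
    _ = ‖w‖ * ((u ^ (-(2 * x)) - (u + 1) ^ (-(2 * x))) / (2 * x)) := by
        rw [hnorm, hrp]

lemma key_alg {x : ℝ} (hx : 0 < x) {u : ℝ} (hu : 1 ≤ u) :
    u ^ x * (u ^ (-(2 * x)) - (u + 1) ^ (-(2 * x))) ≤ 2 * (u ^ (-x) - (u + 1) ^ (-x)) := by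
  have hu0 : (0:ℝ) < u := by linarith
  have hu10 : (0:ℝ) < u + 1 := by linarith
  set a := u ^ (-x) with ha
  set b := (u + 1) ^ (-x) with hb
  set hn := u ^ x with hhn
  have ha2 : u ^ (-(2 * x)) = a * a := by
    rw [ha, ← Real.rpow_add hu0]; congr 1; ring
  have hb2 : (u + 1) ^ (-(2 * x)) = b * b := by
    rw [hb, ← Real.rpow_add hu10]; congr 1; ring
  have hna : hn * a = 1 := by
    rw [hhn, ha, ← Real.rpow_add hu0]; simp
  have a0 : 0 ≤ a := Real.rpow_nonneg hu0.le _
  have e1 : a * (1 - hn * b) ^ 2 = a - 2 * b + hn * (b * b) := by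
    linear_combination (hn * b * b - 2 * b) * hna
  have e2 : hn * (a * a - b * b) = a - hn * (b * b) := by
    linear_combination a * hna
  rw [ha2, hb2]
  nlinarith [mul_nonneg a0 (sq_nonneg (1 - hn * b))]

end Stmt18Aux

set_option maxHeartbeats 3000000 in
theorem stmt_18 {X : Type*} [NormedAddCommGroup X] [NormedSpace ℂ X] [CompleteSpace X]
    (a : ℕ → X) (x C : ℝ) (hx : 0 < x) (hC : 0 < C)
    (hbound : ∀ t : ℝ, 0 ≤ t →
      ‖Real.exp (-x * t) •
          ∑ n ∈ (Finset.Icc 1 ⌊Real.exp t⌋₊).filter (fun n : ℕ => Real.log (n : ℝ) < t),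
            ((n : ℝ) ^ x) • a n‖ ≤ C) :
    ∀ y : ℝ,
      (∃ L : X,
        Filter.Tendsto
          (fun v : ℝ =>
            ∑ n ∈ (Finset.Icc 1 ⌊Real.exp v⌋₊).filter (fun n : ℕ => Real.log (n : ℝ) < v),
              (((n : ℕ) : ℂ) ^ (-((x : ℂ) + y * Complex.I))) • a n)
          Filter.atTop (nhds L)) ∧
      ∀ t : ℝ, 0 ≤ t → ∃ Lt : X,
        Filter.Tendsto
          (fun v : ℝ =>
            ∑ n ∈ (Finset.Icc 1 ⌊Real.exp v⌋₊).filter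
                (fun n : ℕ => t ≤ Real.log (n : ℝ) ∧ Real.log (n : ℝ) < v),
              (((n : ℕ) : ℂ) ^ (-((x : ℂ) + y * Complex.I))) • a n)
          Filter.atTop (nhds Lt) ∧
        ‖Real.exp (x * t) • Lt‖ ≤ C * (3 + |y| / x) := by
  intro y
  have hxne : x ≠ 0 := ne_of_gt hx
  set w : ℂ := (x : ℂ) + (y : ℂ) * Complex.I + (x : ℂ) with hw
  have hwre : w.re = 2 * x := by simp [hw]; ring
  have hw0 : w ≠ 0 := by
    intro h
    rw [h] at hwre
    simp at hwre
    linarith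
  have hD0 : 0 ≤ ‖w‖ := norm_nonneg w
  have hwabs : ‖w‖ ≤ 2 * x + |y| := by
    have h1 := Complex.norm_le_abs_re_add_abs_im w
    have him : w.im = y := by simp [hw]
    rw [hwre, him, abs_of_pos (by linarith : (0:ℝ) < 2*x)] at h1
    exact h1
  set c : ℕ → ℂ := fun n => ((n : ℕ) : ℂ) ^ (-w) with hc
  set f : ℕ → X := fun n : ℕ => (((n : ℕ) : ℂ) ^ (-((x : ℂ) + y * Complex.I))) • a n with hf
  set b : ℕ → X := fun n : ℕ => ((n : ℝ) ^ x) • a n with hb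
  set B : ℕ → X := fun N => ∑ n ∈ Finset.Ioc 0 N, b n with hB
  set S : ℕ → X := fun N => ∑ n ∈ Finset.Ioc 0 N, f n with hS
  -- term identity
  have hfcb : ∀ n : ℕ, 1 ≤ n → f n = c n • b n := by
    intro n hn
    have hn0 : ((n : ℕ) : ℂ) ≠ 0 := Nat.cast_ne_zero.mpr (by omega)
    show (((n : ℕ) : ℂ) ^ (-((x : ℂ) + y * Complex.I))) • a n
        = (((n : ℕ) : ℂ) ^ (-w)) • (((n : ℝ) ^ x) • a n)
    have hr : ((n : ℝ) ^ x) • a n = ((((n:ℝ) ^ x : ℝ) : ℂ)) • a n := by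
      rw [← Complex.coe_algebraMap, algebraMap_smul]
    rw [hr, smul_smul, Complex.ofReal_cpow (n.cast_nonneg) x]
    have hcast : (((n:ℝ) : ℂ)) = ((n : ℕ) : ℂ) := by push_cast; ring
    rw [hcast, ← Complex.cpow_add _ _ hn0]
    congr 1
    rw [hw]
    ring
  have hcnorm : ∀ n : ℕ, 1 ≤ n → ‖c n‖ = (n : ℝ) ^ (-(2 * x)) := by
    intro n hn
    have hn0 : (0:ℝ) < n := by exact_mod_cast hn
    show ‖((n : ℕ) : ℂ) ^ (-w)‖ = (n : ℝ) ^ (-(2 * x))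
    have hcast : (((n:ℕ) : ℂ)) = (((n:ℝ)) : ℂ) := by push_cast; ring
    rw [hcast, Complex.norm_cpow_eq_rpow_re_of_pos hn0]
    congr 1
    simp [Complex.neg_re, hwre]
  -- bound on B
  have hbound' : ∀ t : ℝ, 0 ≤ t → (Real.exp (x * t))⁻¹ * ‖B (Stmt18Aux.mm t)‖ ≤ C := by
    intro t ht
    have hbd := hbound t ht
    rw [Stmt18Aux.filter_eq t] at hbd
    rw [norm_smul, Real.norm_eq_abs, abs_of_pos (Real.exp_pos _), neg_mul, Real.exp_neg] at hbd
    exact hbd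
  have hBb : ∀ N : ℕ, ‖B N‖ ≤ C * (N : ℝ) ^ x := by
    intro N
    rcases Nat.eq_zero_or_pos N with rfl | hN
    · simp [hB, Real.zero_rpow hxne]
    · have hNR : (0:ℝ) < N := by exact_mod_cast hN
      have hlog : (0:ℝ) ≤ Real.log N := Real.log_nonneg (by exact_mod_cast hN)
      have hlt : Real.log N < Real.log ((N:ℝ) + 1) := Real.log_lt_log hNR (by linarith)
      have htd : Tendsto (fun t : ℝ => C * Real.exp (x * t)) (nhdsWithin (Real.log N) (Set.Ioi (Real.log N)))
          (nhds (C * (N:ℝ) ^ x)) := by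
        have hev : (N:ℝ) ^ x = Real.exp (x * Real.log N) := by
          rw [Real.rpow_def_of_pos hNR, mul_comm]
        rw [hev]
        exact ((continuous_const.mul (Real.continuous_exp.comp
          (continuous_const.mul continuous_id))).tendsto _).mono_left nhdsWithin_le_nhds
      refine ge_of_tendsto htd ?_
      filter_upwards [Ioo_mem_nhdsGT hlt] with t htt
      have ht0 : 0 ≤ t := le_of_lt (lt_of_le_of_lt hlog htt.1)
      have hmmt : Stmt18Aux.mm t = N := by
        have h1 : N ≤ Stmt18Aux.mm t :=
          Stmt18Aux.le_mm_iff.mpr ((Real.log_lt_iff_lt_exp hNR).mp htt.1)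
        have h2 : ¬ (N + 1) ≤ Stmt18Aux.mm t := by
          intro h
          have h3 := Stmt18Aux.le_mm_iff.mp h
          push_cast at h3
          have h4 : Real.log ((N:ℝ) + 1) < t := (Real.log_lt_iff_lt_exp (by linarith)).mpr h3
          linarith [htt.2]
        omega
      have hbd := hbound' t ht0
      rw [hmmt] at hbd
      calc ‖B N‖ = Real.exp (x * t) * ((Real.exp (x * t))⁻¹ * ‖B N‖) := by
            field_simp
        _ ≤ Real.exp (x * t) * C := mul_le_mul_of_nonneg_left hbd (Real.exp_pos _).le
        _ = C * Real.exp (x * t) := mul_comm _ _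
  -- c N • B N → 0
  have hcB0 : Tendsto (fun N : ℕ => c N • B N) atTop (nhds 0) := by
    apply squeeze_zero_norm' (a := fun N : ℕ => C * (N : ℝ) ^ (-x))
    · filter_upwards [eventually_ge_atTop 1] with n hn
      have hn0 : (0:ℝ) < n := by exact_mod_cast hn
      rw [norm_smul, hcnorm n hn]
      calc (n:ℝ) ^ (-(2*x)) * ‖B n‖ ≤ (n:ℝ) ^ (-(2*x)) * (C * (n:ℝ) ^ x) :=
            mul_le_mul_of_nonneg_left (hBb n) (Real.rpow_nonneg hn0.le _)
        _ = C * ((n:ℝ) ^ (-(2*x)) * (n:ℝ) ^ x) := by ring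
        _ = C * (n:ℝ) ^ (-x) := by
            rw [← Real.rpow_add hn0]
            congr 1
            ring
    · have h1 : Tendsto (fun N : ℕ => ((N:ℝ)) ^ (-x)) atTop (nhds 0) :=
        (tendsto_rpow_neg_atTop hx).comp tendsto_natCast_atTop_atTop
      simpa using h1.const_mul C
  -- Abel summation
  have habel : ∀ M N : ℕ, M ≤ N → (∑ n ∈ Finset.Ioc M N, c n • b n)
      = c N • B N - c M • B M + ∑ n ∈ Finset.Ico M N, (c n - c (n + 1)) • B n := by
    intro M N h
    induction N, h using Nat.le_induction with
    | base => simp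
    | succ N hMN ih =>
      rw [Finset.sum_Ioc_succ_top (by omega), ih, Finset.sum_Ico_succ_top (by omega)]
      have hBs : B (N + 1) = B N + b (N + 1) := by
        show (∑ n ∈ Finset.Ioc 0 (N + 1), b n) = _
        rw [Finset.sum_Ioc_succ_top (Nat.zero_le _)]
      rw [hBs]
      module
  have habel' : ∀ M N : ℕ, M < N → (∑ n ∈ Finset.Ioc M N, c n • b n)
      = c N • B N - c (M + 1) • B M + ∑ n ∈ Finset.Ico (M + 1) N, (c n - c (n + 1)) • B n := by
    intro M N h
    rw [habel M N h.le, Finset.sum_eq_sum_Ico_succ_bot h]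
    module
  -- term estimate
  have hterm : ∀ n : ℕ, 1 ≤ n → ‖(c n - c (n + 1)) • B n‖
      ≤ C * ‖w‖ / x * ((n:ℝ) ^ (-x) - ((n:ℝ) + 1) ^ (-x)) := by
    intro n hn
    have hn1 : (1:ℝ) ≤ (n:ℝ) := by exact_mod_cast hn
    have hn0 : (0:ℝ) < n := by linarith
    have hdiff : ‖c n - c (n + 1)‖
        ≤ ‖w‖ * (((n:ℝ) ^ (-(2*x)) - ((n:ℝ) + 1) ^ (-(2*x))) / (2 * x)) := by
      have h1 := Stmt18Aux.cpow_diff_bound hx hwre hn1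
      have hcast1 : (((n:ℝ)) : ℂ) = ((n : ℕ) : ℂ) := by push_cast; ring
      have hcast2 : (((n:ℝ) + 1 : ℝ) : ℂ) = (((n + 1 : ℕ)) : ℂ) := by push_cast; ring
      rw [hcast1, hcast2] at h1
      exact h1
    have hΔ2 : 0 ≤ (n:ℝ) ^ (-(2*x)) - ((n:ℝ) + 1) ^ (-(2*x)) := by
      have := Real.rpow_le_rpow_of_nonpos hn0 (by linarith : (n:ℝ) ≤ (n:ℝ) + 1)
        (by linarith : -(2*x) ≤ 0)
      linarith
    have hΔ1 : 0 ≤ (n:ℝ) ^ (-x) - ((n:ℝ) + 1) ^ (-x) := by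
      have := Real.rpow_le_rpow_of_nonpos hn0 (by linarith : (n:ℝ) ≤ (n:ℝ) + 1)
        (by linarith : -x ≤ 0)
      linarith
    have hkey := Stmt18Aux.key_alg hx hn1
    calc ‖(c n - c (n + 1)) • B n‖ = ‖c n - c (n + 1)‖ * ‖B n‖ := norm_smul _ _
      _ ≤ (‖w‖ * (((n:ℝ) ^ (-(2*x)) - ((n:ℝ) + 1) ^ (-(2*x))) / (2 * x)))
            * (C * (n:ℝ) ^ x) := by
          apply mul_le_mul hdiff (hBb n) (norm_nonneg _)
          positivity
      _ = (C * ‖w‖ / (2 * x)) * ((n:ℝ) ^ x * ((n:ℝ) ^ (-(2*x)) - ((n:ℝ) + 1) ^ (-(2*x)))) := by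
          ring
      _ ≤ (C * ‖w‖ / (2 * x)) * (2 * ((n:ℝ) ^ (-x) - ((n:ℝ) + 1) ^ (-x))) := by
          apply mul_le_mul_of_nonneg_left hkey (by positivity)
      _ = C * ‖w‖ / x * ((n:ℝ) ^ (-x) - ((n:ℝ) + 1) ^ (-x)) := by
          field_simp
  -- sum estimate (telescoping)
  have hsum' : ∀ M N : ℕ, M + 1 ≤ N → (∑ n ∈ Finset.Ico (M + 1) N, ‖(c n - c (n + 1)) • B n‖)
      ≤ C * ‖w‖ / x * (((M:ℝ) + 1) ^ (-x) - (N:ℝ) ^ (-x)) := by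
    intro M N h
    induction N, h using Nat.le_induction with
    | base =>
      rw [Finset.Ico_self]
      simp only [Finset.sum_empty]
      push_cast
      simp
    | succ N hMN ih =>
      rw [Finset.sum_Ico_succ_top (by omega)]
      have ht := hterm N (by omega)
      push_cast
      push_cast at ih ht
      linarith
  -- S N - S M identity
  have hSdiff : ∀ M N : ℕ, M < N → S N - S M
      = c N • B N - c (M + 1) • B M + ∑ n ∈ Finset.Ico (M + 1) N, (c n - c (n + 1)) • B n := by
    intro M N h
    have h1 : (∑ n ∈ Finset.Ioc 0 M, f n) + (∑ n ∈ Finset.Ioc M N, f n)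
        = ∑ n ∈ Finset.Ioc 0 N, f n := Finset.sum_Ioc_consecutive _ (Nat.zero_le M) h.le
    have h2 : (∑ n ∈ Finset.Ioc M N, f n) = ∑ n ∈ Finset.Ioc M N, c n • b n :=
      Finset.sum_congr rfl fun n hn => hfcb n (by
        have := (Finset.mem_Ioc.mp hn).1
        omega)
    have h3 : S N - S M = ∑ n ∈ Finset.Ioc M N, c n • b n := by
      rw [← h2]
      show (∑ n ∈ Finset.Ioc 0 N, f n) - (∑ n ∈ Finset.Ioc 0 M, f n) = _
      rw [← h1]
      abel
    rw [h3, habel' M N h]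
  -- per-boundary bound
  have hbdry : ∀ M : ℕ, ‖c (M + 1) • B M‖ ≤ C * ((M:ℝ) + 1) ^ (-x) := by
    intro M
    have hM10 : (0:ℝ) < (M:ℝ) + 1 := by positivity
    rw [norm_smul, hcnorm (M + 1) (by omega)]
    push_cast
    calc ((M:ℝ) + 1) ^ (-(2*x)) * ‖B M‖ ≤ ((M:ℝ) + 1) ^ (-(2*x)) * (C * ((M:ℝ) + 1) ^ x) := by
          apply mul_le_mul_of_nonneg_left _ (Real.rpow_nonneg hM10.le _)
          refine (hBb M).trans ?_
          apply mul_le_mul_of_nonneg_left _ hC.le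
          exact Real.rpow_le_rpow (Nat.cast_nonneg M) (by linarith) hx.le
      _ = C * (((M:ℝ) + 1) ^ (-(2*x)) * ((M:ℝ) + 1) ^ x) := by ring
      _ = C * ((M:ℝ) + 1) ^ (-x) := by
          rw [← Real.rpow_add hM10]
          congr 1
          ring
  -- Cauchy bound
  have hSd : ∀ M N : ℕ, M ≤ N →
      ‖S N - S M‖ ≤ (C * 2 + C * ‖w‖ / x) * ((M:ℝ) + 1) ^ (-x) := by
    intro M N h
    have hM10 : (0:ℝ) < (M:ℝ) + 1 := by positivity
    rcases eq_or_lt_of_le h with rfl | hlt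
    · simp only [sub_self, norm_zero]
      positivity
    · rw [hSdiff M N hlt]
      have h1 : ‖c N • B N‖ ≤ C * ((M:ℝ) + 1) ^ (-x) := by
        have hN0 : (0:ℝ) < N := by
          have : (1:ℕ) ≤ N := by omega
          exact_mod_cast Nat.lt_of_lt_of_le Nat.zero_lt_one this
        rw [norm_smul, hcnorm N (by omega)]
        calc (N:ℝ) ^ (-(2*x)) * ‖B N‖ ≤ (N:ℝ) ^ (-(2*x)) * (C * (N:ℝ) ^ x) :=
              mul_le_mul_of_nonneg_left (hBb N) (Real.rpow_nonneg hN0.le _)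
          _ = C * ((N:ℝ) ^ (-(2*x)) * (N:ℝ) ^ x) := by ring
          _ = C * (N:ℝ) ^ (-x) := by
              rw [← Real.rpow_add hN0]
              congr 1
              ring
          _ ≤ C * ((M:ℝ) + 1) ^ (-x) := by
              apply mul_le_mul_of_nonneg_left _ hC.le
              apply Real.rpow_le_rpow_of_nonpos hM10 _ (by linarith)
              have : (M + 1 : ℕ) ≤ N := by omega
              exact_mod_cast this
      have h2 := hbdry M
      have h3 : ‖∑ n ∈ Finset.Ico (M + 1) N, (c n - c (n + 1)) • B n‖
          ≤ C * ‖w‖ / x * ((M:ℝ) + 1) ^ (-x) := by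
        refine (norm_sum_le _ _).trans ((hsum' M N hlt).trans ?_)
        have hNn : 0 ≤ (N:ℝ) ^ (-x) := Real.rpow_nonneg (Nat.cast_nonneg N) _
        have hfac2 : 0 ≤ C * ‖w‖ / x := div_nonneg (mul_nonneg hC.le hD0) hx.le
        exact mul_le_mul_of_nonneg_left (by linarith) hfac2
      calc ‖c N • B N - c (M + 1) • B M + ∑ n ∈ Finset.Ico (M + 1) N, (c n - c (n + 1)) • B n‖
          ≤ ‖c N • B N - c (M + 1) • B M‖
            + ‖∑ n ∈ Finset.Ico (M + 1) N, (c n - c (n + 1)) • B n‖ := norm_add_le _ _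
        _ ≤ ‖c N • B N‖ + ‖c (M + 1) • B M‖
            + ‖∑ n ∈ Finset.Ico (M + 1) N, (c n - c (n + 1)) • B n‖ := by
            linarith [norm_sub_le (c N • B N) (c (M + 1) • B M)]
        _ ≤ (C * 2 + C * ‖w‖ / x) * ((M:ℝ) + 1) ^ (-x) := by
            have : (C * 2 + C * ‖w‖ / x) * ((M:ℝ) + 1) ^ (-x)
                = C * ((M:ℝ) + 1) ^ (-x) + C * ((M:ℝ) + 1) ^ (-x)
                  + C * ‖w‖ / x * ((M:ℝ) + 1) ^ (-x) := by ring
            linarith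
  have hKnn : 0 ≤ C * 2 + C * ‖w‖ / x :=
    add_nonneg (by positivity) (div_nonneg (mul_nonneg hC.le hD0) hx.le)
  -- Cauchy sequence and limit
  have hcauchy : CauchySeq S := by
    apply cauchySeq_of_le_tendsto_0 (fun N : ℕ => (C * 2 + C * ‖w‖ / x) * ((N:ℝ) + 1) ^ (-x))
    · intro n m N hn hm
      have hanti : ∀ k : ℕ, N ≤ k → ((k:ℝ) + 1) ^ (-x) ≤ ((N:ℝ) + 1) ^ (-x) := by
        intro k hk
        apply Real.rpow_le_rpow_of_nonpos (by positivity) _ (by linarith)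
        have : (N:ℝ) ≤ k := by exact_mod_cast hk
        linarith
      rcases le_total n m with h | h
      · rw [dist_eq_norm, ← norm_neg, neg_sub]
        exact (hSd n m h).trans (mul_le_mul_of_nonneg_left (hanti n hn) hKnn)
      · rw [dist_eq_norm]
        exact (hSd m n h).trans (mul_le_mul_of_nonneg_left (hanti m hm) hKnn)
    · have h1 : Tendsto (fun N : ℕ => ((N:ℝ) + 1) ^ (-x)) atTop (nhds 0) :=
        (tendsto_rpow_neg_atTop hx).comp
          (tendsto_atTop_add_const_right _ 1 tendsto_natCast_atTop_atTop)
      simpa using h1.const_mul (C * 2 + C * ‖w‖ / x)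
  obtain ⟨L, hL⟩ := cauchySeq_tendsto_of_complete hcauchy
  have hS_mm : Tendsto (fun v : ℝ => S (Stmt18Aux.mm v)) atTop (nhds L) :=
    hL.comp Stmt18Aux.tendsto_mm
  constructor
  · refine ⟨L, ?_⟩
    have heq : (fun v : ℝ =>
        ∑ n ∈ (Finset.Icc 1 ⌊Real.exp v⌋₊).filter (fun n : ℕ => Real.log (n : ℝ) < v),
          (((n : ℕ) : ℂ) ^ (-((x : ℂ) + y * Complex.I))) • a n)
        = fun v : ℝ => S (Stmt18Aux.mm v) := by
      funext v
      rw [Stmt18Aux.filter_eq v]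
    rw [heq]
    exact hS_mm
  · intro t ht
    set M := Stmt18Aux.mm t with hM
    have hM10 : (0:ℝ) < (M:ℝ) + 1 := by positivity
    refine ⟨L - S M, ?_, ?_⟩
    · have h2 : Tendsto (fun v : ℝ => S (Stmt18Aux.mm v) - S M) atTop (nhds (L - S M)) :=
        hS_mm.sub_const _
      apply Filter.Tendsto.congr' _ h2
      filter_upwards [Real.tendsto_exp_atTop.eventually (eventually_gt_atTop ((M:ℝ)))] with v hv
      have hMv : M ≤ Stmt18Aux.mm v := Stmt18Aux.le_mm_iff.mpr hv
      have h1 : (∑ n ∈ Finset.Ioc 0 M, f n) + (∑ n ∈ Finset.Ioc M (Stmt18Aux.mm v), f n)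
          = ∑ n ∈ Finset.Ioc 0 (Stmt18Aux.mm v), f n :=
        Finset.sum_Ioc_consecutive _ (Nat.zero_le M) hMv
      rw [Stmt18Aux.filter_eq2 t v, ← hM]
      show (∑ n ∈ Finset.Ioc 0 (Stmt18Aux.mm v), f n) - (∑ n ∈ Finset.Ioc 0 M, f n)
        = ∑ n ∈ Finset.Ioc M (Stmt18Aux.mm v), f n
      rw [← h1]
      abel
    · -- the norm bound
      have hSiglim : Tendsto (fun N : ℕ => S N - S M + c (M + 1) • B M - c N • B N) atTop
          (nhds (L - S M + c (M + 1) • B M)) := by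
        have h1 := ((hL.sub_const (S M)).add_const (c (M + 1) • B M)).sub hcB0
        simpa using h1
      have hSigbd : ∀ᶠ N in atTop,
          ‖S N - S M + c (M + 1) • B M - c N • B N‖
            ≤ C * ‖w‖ / x * ((M:ℝ) + 1) ^ (-x) := by
        filter_upwards [eventually_gt_atTop M] with N hN
        have hid := hSdiff M N hN
        have heq2 : S N - S M + c (M + 1) • B M - c N • B N
            = ∑ n ∈ Finset.Ico (M + 1) N, (c n - c (n + 1)) • B n := by
          rw [hid]
          abel
        rw [heq2]
        refine (norm_sum_le _ _).trans ((hsum' M N hN).trans ?_)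
        have hNn : 0 ≤ (N:ℝ) ^ (-x) := Real.rpow_nonneg (Nat.cast_nonneg N) _
        have hfac2 : 0 ≤ C * ‖w‖ / x := div_nonneg (mul_nonneg hC.le hD0) hx.le
        exact mul_le_mul_of_nonneg_left (by linarith) hfac2
      have hbd1 : ‖L - S M + c (M + 1) • B M‖ ≤ C * ‖w‖ / x * ((M:ℝ) + 1) ^ (-x) :=
        le_of_tendsto hSiglim.norm hSigbd
      have hbd3 : ‖L - S M‖ ≤ (C * ‖w‖ / x + C) * ((M:ℝ) + 1) ^ (-x) := by
        have heq3 : L - S M = (L - S M + c (M + 1) • B M) - c (M + 1) • B M := by abel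
        rw [heq3]
        refine (norm_sub_le _ _).trans ?_
        have := hbdry M
        calc ‖L - S M + c (M + 1) • B M‖ + ‖c (M + 1) • B M‖
            ≤ C * ‖w‖ / x * ((M:ℝ) + 1) ^ (-x) + C * ((M:ℝ) + 1) ^ (-x) :=
              add_le_add hbd1 this
          _ = (C * ‖w‖ / x + C) * ((M:ℝ) + 1) ^ (-x) := by ring
      have hexp_le : Real.exp (x * t) ≤ ((M:ℝ) + 1) ^ x := by
        have hceil : 1 ≤ ⌈Real.exp t⌉₊ := Nat.one_le_ceil_iff.mpr (Real.exp_pos t)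
        have hMe : M + 1 = ⌈Real.exp t⌉₊ := by
          rw [hM]
          unfold Stmt18Aux.mm
          omega
        have h1 : Real.exp t ≤ (M:ℝ) + 1 := by
          calc Real.exp t ≤ (⌈Real.exp t⌉₊ : ℝ) := Nat.le_ceil _
            _ = (M:ℝ) + 1 := by rw [← hMe]; push_cast; ring
        calc Real.exp (x * t) = (Real.exp t) ^ x := by
              rw [Real.rpow_def_of_pos (Real.exp_pos t), Real.log_exp, mul_comm]
          _ ≤ ((M:ℝ) + 1) ^ x := Real.rpow_le_rpow (Real.exp_pos t).le h1 hx.le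
      have hP1 : Real.exp (x * t) * ((M:ℝ) + 1) ^ (-x) ≤ 1 := by
        rw [Real.rpow_neg hM10.le, ← div_eq_mul_inv, div_le_one (Real.rpow_pos_of_pos hM10 x)]
        exact hexp_le
      rw [norm_smul, Real.norm_eq_abs, abs_of_pos (Real.exp_pos _)]
      have hfac : 0 ≤ C * ‖w‖ / x + C :=
        add_nonneg (div_nonneg (mul_nonneg hC.le hD0) hx.le) hC.le
      calc Real.exp (x * t) * ‖L - S M‖
          ≤ Real.exp (x * t) * ((C * ‖w‖ / x + C) * ((M:ℝ) + 1) ^ (-x)) :=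
            mul_le_mul_of_nonneg_left hbd3 (Real.exp_pos _).le
        _ = (C * ‖w‖ / x + C) * (Real.exp (x * t) * ((M:ℝ) + 1) ^ (-x)) := by ring
        _ ≤ (C * ‖w‖ / x + C) * 1 := mul_le_mul_of_nonneg_left hP1 hfac
        _ ≤ C * (3 + |y| / x) := by
            rw [mul_one]
            have h5 : C * (3 + |y| / x) = C * (2 * x + |y|) / x + C := by
              field_simp
              ring
            rw [h5]
            have h6 : C * ‖w‖ ≤ C * (2 * x + |y|) :=
              mul_le_mul_of_nonneg_left hwabs hC.le
            have h7 : C * ‖w‖ / x ≤ C * (2 * x + |y|) / x :=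
              div_le_div_of_nonneg_right h6 hx.le
            linarith
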